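/- arXiv:1007.0738 — 2 statements merged into one kernel-verified Lean document; each statement's English description precedes it below -/
import Mathlib

section
/- Let p ∈ (1,∞) and a > 0. The function g(t) = ∫_t^a H_a(w)^{−1/2} dw is finite for every t ∈ [0,a], continuous and strictly decreasing on [0,a], with g(a) = 0 and g(0) = θ_a. Its inverse function y : [0, θ_a] → [0, a] is continuous and strictly decreasing and satisfies y(0) = a, y(θ_a) = 0, y > 0 on [0, θ_a), and y'(θ) = −√(H_a(y(θ))) for every θ ∈ (0, θ_a). -/
set_option maxHeartbeats 1000000

open Set Real Filter MeasureTheory Topology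

/-- `F_a(y,w)` from the paper (with parameter `p`). -/
noncomputable def Fa (p a y w : ℝ) : ℝ :=
  (8*p*(1/a + 2*y) + (2*p/a + 4*(3*p - 2)*y + 2*(p - 1)*y*w)*w) / (y^2 * (4 + (p - 1)*w))

/-- `G` is the family `a ↦ G_a` of solutions of `G_a' = -F_a(y, G_a)` on `(0,1)`
with `G_a(1) = 0`: each `G_a` is continuous on `(0,1]`, positive on `(0,1)` and
strictly decreasing on `(0,1]`. -/
def IsGFamily (p : ℝ) (G : ℝ → ℝ → ℝ) : Prop :=
  ∀ a : ℝ, 0 < a →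
    ContinuousOn (G a) (Set.Ioc 0 1) ∧
    G a 1 = 0 ∧
    (∀ y ∈ Set.Ioo (0:ℝ) 1, HasDerivAt (G a) (-(Fa p a y (G a y))) y) ∧
    (∀ y ∈ Set.Ioo (0:ℝ) 1, 0 < G a y) ∧
    StrictAntiOn (G a) (Set.Ioc 0 1)

/-- `H_a(y) = y² G_a(y/a)`. -/
noncomputable def Ha (G : ℝ → ℝ → ℝ) (a y : ℝ) : ℝ := y^2 * G a (y/a)

/-- `g(t) = ∫_t^a H_a(w)^{-1/2} dw`. -/
noncomputable def gfun (G : ℝ → ℝ → ℝ) (a t : ℝ) : ℝ :=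
  ∫ w in Set.Ioo t a, (Real.sqrt (Ha G a w))⁻¹

/-- `θ_a = ∫_0^a H_a(w)^{-1/2} dw`. -/
noncomputable def thetaA (G : ℝ → ℝ → ℝ) (a : ℝ) : ℝ := gfun G a 0

private lemma myAntiOn {φ φ' : ℝ → ℝ} {c d : ℝ}
    (hc : ContinuousOn φ (Set.Icc c d)) (hd : ∀ x ∈ Set.Ioo c d, HasDerivAt φ (φ' x) x)
    (h0 : ∀ x ∈ Set.Ioo c d, φ' x ≤ 0) : AntitoneOn φ (Set.Icc c d) := by
  apply antitoneOn_of_deriv_nonpos (convex_Icc c d) hc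
  · intro x hx; rw [interior_Icc] at hx
    exact ((hd x hx).differentiableAt).differentiableWithinAt
  · intro x hx; rw [interior_Icc] at hx
    rw [(hd x hx).deriv]; exact h0 x hx

private lemma Fa_lb {p a y w B : ℝ} (hp : 1 < p) (ha : 0 < a) (hy : 0 < y)
    (hw : 0 ≤ w) (hwB : w ≤ B) :
    8*p/a / (4 + (p-1)*B) / y^2 ≤ Fa p a y w := by
  have hp1 : (0:ℝ) < p - 1 := by linarith
  have hdw : (0:ℝ) < 4 + (p-1)*w := by nlinarith
  have hdB : (0:ℝ) < 4 + (p-1)*B := by nlinarith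
  have hpa : (0:ℝ) ≤ 8*p/a := by positivity
  have hQ : 0 ≤ 2*p/a + 4*(3*p-2)*y + 2*(p-1)*y*w := by
    have h1 : (0:ℝ) ≤ 2*p/a := div_nonneg (by linarith) ha.le
    nlinarith [mul_nonneg (mul_nonneg hp1.le hy.le) hw]
  have hN : 8*p/a ≤ 8*p*(1/a + 2*y) + (2*p/a + 4*(3*p - 2)*y + 2*(p - 1)*y*w)*w := by
    have h8 : 8*p*(1/a+2*y) = 8*p/a + 16*p*y := by ring
    nlinarith [mul_nonneg hQ hw, mul_pos (show (0:ℝ) < p by linarith) hy]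
  calc 8*p/a / (4 + (p-1)*B) / y^2 = (8*p/a) / ((4+(p-1)*B) * y^2) := by rw [div_div]
    _ ≤ (8*p/a) / ((4+(p-1)*w) * y^2) := by
        gcongr
    _ = (8*p/a) / (y^2 * (4+(p-1)*w)) := by rw [mul_comm (4+(p-1)*w) (y^2)]
    _ ≤ _ := by rw [Fa]; gcongr

private lemma Fa_lb2 {p a y w : ℝ} (hp : 1 < p) (ha : 0 < a) (hy : 0 < y)
    (hw : 0 ≤ w) (hw4 : 4 ≤ (p-1)*w) :
    w / y ≤ Fa p a y w := by
  have hp1 : (0:ℝ) < p - 1 := by linarith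
  have hdw : (0:ℝ) < 4 + (p-1)*w := by nlinarith
  have hQ : (0:ℝ) ≤ 8*p*(1/a+2*y) + (2*p/a + 4*(3*p-2)*y)*w := by
    have h1 : (0:ℝ) ≤ 2*p/a := div_nonneg (by linarith) ha.le
    have h2 : (0:ℝ) < 1/a := by positivity
    nlinarith [mul_pos (show (0:ℝ) < p by linarith) hy]
  have key : w*y*(4+(p-1)*w) ≤ 8*p*(1/a + 2*y) + (2*p/a + 4*(3*p - 2)*y + 2*(p - 1)*y*w)*w := by
    nlinarith [mul_nonneg (mul_nonneg (sub_nonneg.2 hw4) hw) hy.le]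
  rw [Fa, div_le_div_iff₀ hy (by positivity)]
  calc w * (y^2 * (4 + (p-1)*w)) = (w*y*(4+(p-1)*w)) * y := by ring
    _ ≤ _ := by gcongr

theorem g_and_inverse_properties (p a : ℝ) (hp : 1 < p) (ha : 0 < a)
    (G : ℝ → ℝ → ℝ) (hG : IsGFamily p G) :
    MeasureTheory.IntegrableOn (fun w => (Real.sqrt (Ha G a w))⁻¹) (Set.Ioo 0 a) ∧
    ContinuousOn (gfun G a) (Set.Icc 0 a) ∧
    StrictAntiOn (gfun G a) (Set.Icc 0 a) ∧
    gfun G a a = 0 ∧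
    gfun G a 0 = thetaA G a ∧
    (∃ y : ℝ → ℝ,
      ContinuousOn y (Set.Icc 0 (thetaA G a)) ∧
      StrictAntiOn y (Set.Icc 0 (thetaA G a)) ∧
      Set.MapsTo y (Set.Icc 0 (thetaA G a)) (Set.Icc 0 a) ∧
      (∀ t ∈ Set.Icc 0 a, y (gfun G a t) = t) ∧
      (∀ s ∈ Set.Icc 0 (thetaA G a), gfun G a (y s) = s) ∧
      y 0 = a ∧ y (thetaA G a) = 0 ∧
      (∀ s ∈ Set.Ico 0 (thetaA G a), 0 < y s) ∧
      (∀ s ∈ Set.Ioo 0 (thetaA G a), HasDerivAt y (-Real.sqrt (Ha G a (y s))) s)) := by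
  obtain ⟨hc, h1, hd, hqpos, hanti⟩ := hG a ha
  have hp1 : (0:ℝ) < p - 1 := by linarith
  set f : ℝ → ℝ := fun w => (Real.sqrt (Ha G a w))⁻¹ with hf
  -- nonnegativity of G a on Ioc 0 1
  have hq0 : ∀ y ∈ Set.Ioc (0:ℝ) 1, 0 ≤ G a y := by
    intro y hy
    rcases lt_or_eq_of_le hy.2 with h | h
    · exact (hqpos y ⟨hy.1, h⟩).le
    · rw [h, h1]
  -- the constant M = G a (1/2) and m
  have hMpos : 0 < G a 2⁻¹ := hqpos _ (by norm_num)
  set M : ℝ := G a 2⁻¹ with hM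
  set m : ℝ := 8*p/a/(4+(p-1)*M) with hm
  have hmpos : 0 < m := div_pos (by positivity) (by nlinarith)
  -- lower bound near 1
  have near1 : ∀ y ∈ Set.Icc (2⁻¹:ℝ) 1, m*(1-y) ≤ G a y := by
    have hsub : Set.Icc (2⁻¹:ℝ) 1 ⊆ Set.Ioc 0 1 := fun x hx => ⟨by linarith [hx.1], hx.2⟩
    have haux : AntitoneOn (fun y => G a y + m*y) (Set.Icc (2⁻¹:ℝ) 1) := by
      apply myAntiOn (φ' := fun x => -(Fa p a x (G a x)) + m)
      · exact (hc.mono hsub).add (continuous_const.mul continuous_id).continuousOn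
      · intro x hx
        have hx' : x ∈ Set.Ioo (0:ℝ) 1 := ⟨by linarith [hx.1], hx.2⟩
        have h := (hd x hx').add ((hasDerivAt_id x).const_mul m)
        simp only [mul_one] at h
        exact h
      · intro x hx
        have hx' : x ∈ Set.Ioo (0:ℝ) 1 := ⟨by linarith [hx.1], hx.2⟩
        have hwM : G a x ≤ M := by
          rcases eq_or_lt_of_le hx.1.le with h | h
          · rw [← h]
          · exact (hanti (by norm_num) (hsub ⟨hx.1.le, hx.2.le⟩) h).le
        have hFa := Fa_lb hp ha hx'.1 (hq0 x (hsub ⟨hx.1.le, hx.2.le⟩)) hwM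
        have hy2 : x^2 ≤ 1 := by nlinarith [hx'.1, hx.2]
        have : m ≤ m / x^2 := by
          rw [le_div_iff₀ (pow_pos hx'.1 2)]; nlinarith
        linarith [hFa, this]
    intro y hy
    have := haux hy (by norm_num : (1:ℝ) ∈ Set.Icc (2⁻¹:ℝ) 1) hy.2
    simp only [h1] at this
    linarith
  -- there is a point where G a is at least 4/(p-1)
  have hy1ex : ∃ y₁, 0 < y₁ ∧ y₁ ≤ 2⁻¹ ∧ 4/(p-1) ≤ G a y₁ := by
    by_contra hcon
    push_neg at hcon
    set B : ℝ := 4/(p-1) with hB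
    have hBpos : 0 < B := by positivity
    set c : ℝ := 8*p/a/(4+(p-1)*B) with hcc
    have hc0 : 0 < c := div_pos (by positivity) (by nlinarith)
    set ε : ℝ := min 4⁻¹ (c/(B+4*c)) with hε
    have hεpos : 0 < ε := lt_min (by norm_num) (by positivity)
    have hε4 : ε ≤ 4⁻¹ := min_le_left _ _
    have hsub : Set.Icc ε 4⁻¹ ⊆ Set.Ioc (0:ℝ) 1 :=
      fun x hx => ⟨lt_of_lt_of_le hεpos hx.1, by linarith [hx.2]⟩
    have haux : AntitoneOn (fun x => G a x - c*x⁻¹) (Set.Icc ε 4⁻¹) := by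
      apply myAntiOn (φ' := fun x => -(Fa p a x (G a x)) - c * (-(x^2)⁻¹))
      · refine (hc.mono hsub).sub (continuousOn_const.mul ?_)
        exact ContinuousOn.inv₀ continuousOn_id
          (fun x hx => ne_of_gt (lt_of_lt_of_le hεpos hx.1))
      · intro x hx
        have hx0 : x ≠ 0 := ne_of_gt (lt_of_lt_of_le hεpos hx.1.le)
        have hx' : x ∈ Set.Ioo (0:ℝ) 1 :=
          ⟨lt_of_lt_of_le hεpos hx.1.le, by linarith [hx.2]⟩
        exact (hd x hx').sub ((hasDerivAt_inv hx0).const_mul c)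
      · intro x hx
        have hx' : x ∈ Set.Ioo (0:ℝ) 1 :=
          ⟨lt_of_lt_of_le hεpos hx.1.le, by linarith [hx.2]⟩
        have hwB : G a x < B := hcon x hx'.1 (by linarith [hx.2])
        have hFa := Fa_lb hp ha hx'.1 (hq0 x ⟨hx'.1, hx'.2.le⟩) hwB.le
        have : c * (x^2)⁻¹ = c / x^2 := by rw [div_eq_mul_inv]
        have h2 : c / x^2 ≤ Fa p a x (G a x) := by rw [hcc]; exact hFa
        linarith [h2, this.symm.le]
    have h14 : (4⁻¹:ℝ) ∈ Set.Icc ε 4⁻¹ := ⟨hε4, le_rfl⟩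
    have hεm : ε ∈ Set.Icc ε 4⁻¹ := ⟨le_rfl, hε4⟩
    have hA := haux hεm h14 hε4
    simp only at hA
    -- G a 4⁻¹ - 4 c ≤ G a ε - c ε⁻¹
    have hG4 : 0 < G a 4⁻¹ := hqpos _ (by norm_num)
    have hεinv : B + 4*c ≤ c * ε⁻¹ := by
      have h := min_le_right (4⁻¹:ℝ) (c/(B+4*c))
      have hεle : ε ≤ c/(B+4*c) := h
      have : ε * (B+4*c) ≤ c := by
        rw [← le_div_iff₀ (by positivity)]; exact hεle
      calc B + 4*c = (B+4*c) * 1 := by ring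
          _ ≤ (B+4*c) * (ε⁻¹ * ε) := by
              rw [inv_mul_cancel₀ (ne_of_gt hεpos)]
          _ = ((B+4*c) * ε) * ε⁻¹ := by ring
          _ ≤ c * ε⁻¹ := by
              gcongr ?_ * ?_
              · linarith
    have hGε : G a ε < B := hcon ε hεpos (by linarith)
    have h4inv : (4⁻¹:ℝ)⁻¹ = 4 := by norm_num
    rw [h4inv] at hA
    linarith
  obtain ⟨y₁, hy₁pos, hy₁half, hy₁big⟩ := hy1ex
  have hy₁Ioc : y₁ ∈ Set.Ioc (0:ℝ) 1 := ⟨hy₁pos, by linarith⟩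
  set K : ℝ := y₁ * G a y₁ with hK
  have hKpos : 0 < K := mul_pos hy₁pos (lt_of_lt_of_le (by positivity) hy₁big)
  -- lower bound near 0 : K ≤ y * G a y on (0, y₁]
  have near0 : ∀ y ∈ Set.Ioc (0:ℝ) y₁, K ≤ y * G a y := by
    intro y hy
    have hsub : Set.Icc y y₁ ⊆ Set.Ioc (0:ℝ) 1 :=
      fun x hx => ⟨lt_of_lt_of_le hy.1 hx.1, by linarith [hx.2]⟩
    have haux : AntitoneOn (fun x => x * G a x) (Set.Icc y y₁) := by
      apply myAntiOn (φ' := fun x => 1 * G a x + x * -(Fa p a x (G a x)))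
      · exact continuousOn_id.mul (hc.mono hsub)
      · intro x hx
        have hx' : x ∈ Set.Ioo (0:ℝ) 1 :=
          ⟨lt_of_lt_of_le hy.1 hx.1.le, by linarith [hx.2]⟩
        exact (hasDerivAt_id x).mul (hd x hx')
      · intro x hx
        have hx' : x ∈ Set.Ioo (0:ℝ) 1 :=
          ⟨lt_of_lt_of_le hy.1 hx.1.le, by linarith [hx.2]⟩
        have hxy₁ : G a y₁ ≤ G a x := (hanti ⟨hx'.1, hx'.2.le⟩ hy₁Ioc hx.2).le
        have hw4 : 4 ≤ (p-1) * G a x := by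
          rw [div_le_iff₀ hp1] at hy₁big
          nlinarith [mul_le_mul_of_nonneg_left hxy₁ hp1.le]
        have hFa := Fa_lb2 hp ha hx'.1 (hq0 x ⟨hx'.1, hx'.2.le⟩) hw4
        have := (div_le_iff₀ hx'.1).1 hFa
        nlinarith
    have h := haux ⟨le_rfl, hy.2⟩ ⟨hy.2, le_rfl⟩ hy.2
    simpa using h
  -- positivity and continuity of Ha on (0,a)
  have hmem : ∀ w ∈ Set.Ioo (0:ℝ) a, w/a ∈ Set.Ioo (0:ℝ) 1 :=
    fun w hw => ⟨div_pos hw.1 ha, (div_lt_one ha).2 hw.2⟩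
  have hHapos : ∀ w ∈ Set.Ioo (0:ℝ) a, 0 < Ha G a w := by
    intro w hw
    exact mul_pos (pow_pos hw.1 2) (hqpos _ (hmem w hw))
  have hfpos : ∀ w ∈ Set.Ioo (0:ℝ) a, 0 < f w :=
    fun w hw => inv_pos.2 (Real.sqrt_pos.2 (hHapos w hw))
  have hfnonneg : ∀ w, 0 ≤ f w := fun w => inv_nonneg.2 (Real.sqrt_nonneg _)
  have hHacont : ContinuousOn (Ha G a) (Set.Ioo 0 a) := by
    apply ContinuousOn.mul
    · exact (continuous_pow 2).continuousOn
    · exact hc.comp (continuous_id.div_const a).continuousOn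
        (fun w hw => ⟨(hmem w hw).1, (hmem w hw).2.le⟩)
  have hfcont : ContinuousOn f (Set.Ioo 0 a) := by
    apply ContinuousOn.inv₀ (continuous_sqrt.comp_continuousOn hHacont)
    exact fun w hw => ne_of_gt (Real.sqrt_pos.2 (hHapos w hw))
  -- pointwise majorant
  set C₁ : ℝ := (Real.sqrt (K*a))⁻¹ with hC₁
  set C₂ : ℝ := (Real.sqrt ((a*y₁)^2*M))⁻¹ * Real.sqrt a with hC₂
  set C₃ : ℝ := (Real.sqrt (a*m/4))⁻¹ with hC₃
  set C : ℝ := C₁ + C₂ + C₃ with hC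
  have hC₁0 : 0 ≤ C₁ := inv_nonneg.2 (Real.sqrt_nonneg _)
  have hC₂0 : 0 ≤ C₂ := mul_nonneg (inv_nonneg.2 (Real.sqrt_nonneg _)) (Real.sqrt_nonneg _)
  have hC₃0 : 0 ≤ C₃ := inv_nonneg.2 (Real.sqrt_nonneg _)
  have hC0 : 0 ≤ C := by linarith
  clear_value C₁ C₂ C₃ C
  have hbound : ∀ w ∈ Set.Ioo (0:ℝ) a,
      f w ≤ C * (w ^ (-(1/2) : ℝ) + (a-w) ^ (-(1/2) : ℝ)) := by
    intro w hw
    have hw0 : 0 < w := hw.1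
    have hwa : w < a := hw.2
    have ht1 : (0:ℝ) ≤ w ^ (-(1/2) : ℝ) := Real.rpow_nonneg hw0.le _
    have ht2 : (0:ℝ) ≤ (a-w) ^ (-(1/2) : ℝ) := Real.rpow_nonneg (by linarith) _
    have hinvle : ∀ {b : ℝ}, 0 < b → b ≤ Ha G a w → f w ≤ (Real.sqrt b)⁻¹ := by
      intro b hb hble
      have h1' : Real.sqrt b ≤ Real.sqrt (Ha G a w) := Real.sqrt_le_sqrt hble
      have hbpos : 0 < Real.sqrt b := Real.sqrt_pos.2 hb
      exact inv_anti₀ hbpos h1'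
    have hrw : ∀ {x : ℝ}, 0 < x → (Real.sqrt x)⁻¹ = x ^ (-(1/2) : ℝ) := by
      intro x hx
      rw [Real.rpow_neg hx.le, Real.sqrt_eq_rpow]
    rcases le_or_gt w (a*y₁) with hcase1 | hcase1
    · -- w ≤ a y₁ : use near0
      have hwa' : w/a ∈ Set.Ioc (0:ℝ) y₁ := by
        constructor
        · exact div_pos hw0 ha
        · rw [div_le_iff₀ ha]; linarith [mul_comm a y₁]
      have h0 := near0 (w/a) hwa'
      have hq : K * a ≤ (w/a) * G a (w/a) * a := mul_le_mul_of_nonneg_right h0 ha.le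
      have heq : (w/a) * G a (w/a) * a * w = Ha G a w := by
        rw [Ha]; field_simp
      have hHa1 : K*a*w ≤ Ha G a w := by
        nlinarith [mul_le_mul_of_nonneg_right hq hw0.le]
      have h2 : f w ≤ (Real.sqrt (K*a*w))⁻¹ :=
        hinvle (mul_pos (mul_pos hKpos ha) hw0) hHa1
      have h3 : (Real.sqrt (K*a*w))⁻¹ = C₁ * w ^ (-(1/2) : ℝ) := by
        rw [show K*a*w = (K*a)*w by ring, Real.sqrt_mul (mul_pos hKpos ha).le w, mul_inv,
          hC₁, hrw hw0]
      rw [h3] at h2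
      have h4 : C₁ * w ^ (-(1/2) : ℝ) ≤ C * (w ^ (-(1/2) : ℝ) + (a-w) ^ (-(1/2) : ℝ)) := by
        nlinarith [hC, mul_nonneg hC₂0 ht1, mul_nonneg hC₃0 ht1, mul_nonneg hC0 ht2]
      linarith
    · rcases le_or_gt w (a*2⁻¹) with hcase2 | hcase2
      · -- a y₁ ≤ w ≤ a/2
        have hwm : w/a ∈ Set.Ioc (0:ℝ) 1 := ⟨div_pos hw0 ha, by rw [div_le_one ha]; linarith⟩
        have hwhalf : w/a ≤ 2⁻¹ := by rw [div_le_iff₀ ha]; linarith [mul_comm a (2⁻¹:ℝ)]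
        have hG2 : M ≤ G a (w/a) := by
          rcases eq_or_lt_of_le hwhalf with h | h
          · rw [h]
          · exact (hanti hwm (by norm_num) h).le
        have hHa2 : (a*y₁)^2*M ≤ Ha G a w := by
          rw [Ha]
          have h1' : (a*y₁)^2 ≤ w^2 := by nlinarith [mul_le_mul hcase1.le hcase1.le (mul_pos ha hy₁pos).le hw0.le]
          exact mul_le_mul h1' hG2 hMpos.le (by positivity)
        have h2 : f w ≤ (Real.sqrt ((a*y₁)^2*M))⁻¹ :=
          hinvle (mul_pos (pow_pos (mul_pos ha hy₁pos) 2) hMpos) hHa2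
        have hsa : Real.sqrt w ≤ Real.sqrt a := Real.sqrt_le_sqrt (by linarith)
        have hsw : 0 < Real.sqrt w := Real.sqrt_pos.2 hw0
        have e1 : (1:ℝ) ≤ Real.sqrt a * w ^ (-(1/2):ℝ) := by
          rw [← hrw hw0]
          calc (1:ℝ) = Real.sqrt w * (Real.sqrt w)⁻¹ := (mul_inv_cancel₀ (ne_of_gt hsw)).symm
            _ ≤ Real.sqrt a * (Real.sqrt w)⁻¹ := by gcongr
        have h3 : f w ≤ C₂ * w ^ (-(1/2):ℝ) := by
          calc f w ≤ (Real.sqrt ((a*y₁)^2*M))⁻¹ * 1 := by rw [mul_one]; exact h2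
            _ ≤ (Real.sqrt ((a*y₁)^2*M))⁻¹ * (Real.sqrt a * w ^ (-(1/2):ℝ)) := by
                gcongr
            _ = C₂ * w ^ (-(1/2):ℝ) := by rw [hC₂]; ring
        have h4 : C₂ * w ^ (-(1/2) : ℝ) ≤ C * (w ^ (-(1/2) : ℝ) + (a-w) ^ (-(1/2) : ℝ)) := by
          nlinarith [hC, mul_nonneg hC₁0 ht1, mul_nonneg hC₃0 ht1, mul_nonneg hC0 ht2]
        linarith
      · -- a/2 ≤ w < a : use near1
        have hwm : w/a ∈ Set.Icc (2⁻¹:ℝ) 1 := by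
          constructor
          · rw [le_div_iff₀ ha]; linarith [mul_comm (2⁻¹:ℝ) a]
          · rw [div_le_one ha]; linarith
        have h0 := near1 (w/a) hwm
        have ham4 : (0:ℝ) < a*m/4 := by
          have := mul_pos ha hmpos; linarith
        have hHa3 : (a*m/4)*(a-w) ≤ Ha G a w := by
          rw [Ha]
          have h1' : m*(1 - w/a) = m*(a-w)/a := by field_simp
          have h2' : (a*2⁻¹)^2 ≤ w^2 := by nlinarith [mul_le_mul hcase2.le hcase2.le (by positivity : (0:ℝ) ≤ a*2⁻¹) hw0.le]
          have h3' : 0 ≤ m*(a-w)/a := by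
            apply div_nonneg _ ha.le
            nlinarith
          have h4' : (a*2⁻¹)^2 * (m*(a-w)/a) ≤ w^2 * G a (w/a) := by
            apply mul_le_mul h2' _ h3' (by positivity)
            rw [← h1']; exact h0
          calc (a*m/4)*(a-w) = (a*2⁻¹)^2 * (m*(a-w)/a) := by field_simp; ring
            _ ≤ _ := h4'
        have h2 : f w ≤ (Real.sqrt ((a*m/4)*(a-w)))⁻¹ :=
          hinvle (mul_pos ham4 (by linarith)) hHa3
        have h3 : (Real.sqrt ((a*m/4)*(a-w)))⁻¹ = C₃ * (a-w) ^ (-(1/2) : ℝ) := by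
          rw [Real.sqrt_mul ham4.le (a-w), mul_inv, hC₃, hrw (by linarith : (0:ℝ) < a-w)]
        rw [h3] at h2
        have h4 : C₃ * (a-w) ^ (-(1/2) : ℝ) ≤ C * (w ^ (-(1/2) : ℝ) + (a-w) ^ (-(1/2) : ℝ)) := by
          nlinarith [hC, mul_nonneg hC₁0 ht2, mul_nonneg hC₂0 ht2, mul_nonneg hC0 ht1]
        linarith
  -- integrability
  have hB1 : IntegrableOn (fun w => w ^ (-(1/2) : ℝ)) (Set.Ioo 0 a) :=
    (intervalIntegral.integrableOn_Ioo_rpow_iff ha).2 (by norm_num)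
  have hB2 : IntegrableOn (fun w => (a-w) ^ (-(1/2) : ℝ)) (Set.Ioo 0 a) := by
    have h := (intervalIntegral.intervalIntegrable_rpow' (r := -(1/2))
      (by norm_num) (a := 0) (b := a)).comp_sub_left a
    rw [sub_zero, sub_self] at h
    rw [← intervalIntegrable_iff_integrableOn_Ioo_of_le ha.le]
    exact h.symm
  have hBint : IntegrableOn (fun w => C * (w ^ (-(1/2):ℝ) + (a-w) ^ (-(1/2):ℝ)))
      (Set.Ioo 0 a) := (hB1.add hB2).const_mul C
  have hInt : IntegrableOn f (Set.Ioo 0 a) := by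
    apply Integrable.mono' hBint (hfcont.aestronglyMeasurable measurableSet_Ioo)
    rw [ae_restrict_iff' measurableSet_Ioo]
    filter_upwards with w hw
    rw [Real.norm_eq_abs, abs_of_nonneg (hfnonneg w)]
    exact hbound w hw
  have hIntIcc : IntegrableOn f (Set.Icc 0 a) := (integrableOn_Icc_iff_integrableOn_Ioo enorm_ne_top enorm_ne_top).2 hInt
  -- gfun as interval integral
  have hgeq : ∀ t, t ≤ a → gfun G a t = ∫ w in t..a, f w := by
    intro t ht
    rw [intervalIntegral.integral_of_le ht, MeasureTheory.integral_Ioc_eq_integral_Ioo]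
    rfl
  have hgaa : gfun G a a = 0 := by
    rw [gfun]; simp
  have hgcont : ContinuousOn (gfun G a) (Set.Icc 0 a) := by
    have hu : Set.uIcc (0:ℝ) a = Set.Icc 0 a := uIcc_of_le ha.le
    have h := intervalIntegral.continuousOn_primitive_interval_left
      (f := f) (μ := volume) (a := (0:ℝ)) (b := a) (by rw [hu]; exact hIntIcc)
    rw [hu] at h
    exact h.congr (fun t ht => hgeq t ht.2)
  have hganti : StrictAntiOn (gfun G a) (Set.Icc 0 a) := by
    intro t ht s hs hts
    have hii1 : IntervalIntegrable f volume t s :=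
      (hIntIcc.mono_set (by rw [uIcc_of_le hts.le]; exact Icc_subset_Icc ht.1 hs.2)).intervalIntegrable
    have hii2 : IntervalIntegrable f volume s a :=
      (hIntIcc.mono_set (by rw [uIcc_of_le hs.2]; exact Icc_subset_Icc hs.1 le_rfl)).intervalIntegrable
    have hadd := intervalIntegral.integral_add_adjacent_intervals hii1 hii2
    have hpos := intervalIntegral.intervalIntegral_pos_of_pos_on hii1
      (fun x hx => hfpos x ⟨lt_of_le_of_lt ht.1 hx.1, lt_of_lt_of_le hx.2 hs.2⟩) hts
    rw [hgeq t (le_trans hts.le hs.2), hgeq s hs.2]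
    linarith
  have hθpos : 0 < thetaA G a := by
    have h := hganti (Set.left_mem_Icc.2 ha.le) (Set.right_mem_Icc.2 ha.le) ha
    rw [hgaa] at h
    exact h
  -- the inverse function
  have hinj : Set.InjOn (gfun G a) (Set.Icc 0 a) := hganti.injOn
  have hsurj : Set.SurjOn (gfun G a) (Set.Icc 0 a) (Set.Icc 0 (thetaA G a)) := by
    have h := intermediate_value_Icc' ha.le hgcont
    rw [hgaa] at h
    exact fun x hx => h ⟨hx.1, hx.2⟩
  set y : ℝ → ℝ := Function.invFunOn (gfun G a) (Set.Icc 0 a) with hy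
  have hleft : ∀ t ∈ Set.Icc 0 a, y (gfun G a t) = t := fun t ht => hinj.leftInvOn_invFunOn ht
  have hright : ∀ s ∈ Set.Icc 0 (thetaA G a), gfun G a (y s) = s :=
    fun s hs => hsurj.rightInvOn_invFunOn hs
  have hmapsTo : Set.MapsTo y (Set.Icc 0 (thetaA G a)) (Set.Icc 0 a) := by
    intro s hs
    exact Function.invFunOn_mem ((Set.mem_image _ _ _).1 (hsurj hs))
  have hy0 : y 0 = a := by rw [← hgaa]; exact hleft a (Set.right_mem_Icc.2 ha.le)
  have hyθ : y (thetaA G a) = 0 := hleft 0 (Set.left_mem_Icc.2 ha.le)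
  have hyanti : StrictAntiOn y (Set.Icc 0 (thetaA G a)) := by
    intro s hs s' hs' hss'
    rcases lt_trichotomy (y s') (y s) with h | h | h
    · exact h
    · exfalso
      have h2 : s' = s := by rw [← hright s hs, ← hright s' hs', h]
      linarith
    · exfalso
      have h2 := hganti (hmapsTo hs) (hmapsTo hs') h
      rw [hright s hs, hright s' hs'] at h2
      linarith
  have hypos : ∀ s ∈ Set.Ico 0 (thetaA G a), 0 < y s := by
    intro s hs
    have h0 : y s ∈ Set.Icc 0 a := hmapsTo ⟨hs.1, hs.2.le⟩
    rcases eq_or_lt_of_le h0.1 with h | h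
    · exfalso
      have h2 := hright s ⟨hs.1, hs.2.le⟩
      rw [← h] at h2
      have : thetaA G a = s := h2
      linarith [hs.2]
    · exact h
  -- continuity of y
  have hycont : ContinuousOn y (Set.Icc 0 (thetaA G a)) := by
    rw [continuousOn_iff_continuous_restrict]
    haveI : CompactSpace (Set.Icc (0:ℝ) a) :=
      isCompact_iff_compactSpace.mp isCompact_Icc
    set e : (Set.Icc (0:ℝ) a) ≃ (gfun G a '' (Set.Icc 0 a)) :=
      Equiv.Set.imageOfInjOn (gfun G a) (Set.Icc 0 a) hinj with he
    have hecont : Continuous e := Continuous.subtype_mk hgcont.restrict _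
    set h := hecont.homeoOfEquivCompactToT2 with hh
    have key : ∀ s : (Set.Icc (0:ℝ) (thetaA G a)),
        (h.symm ⟨s.1, hsurj s.2⟩ : ℝ) = y s.1 := by
      intro s
      have h2 : h ⟨y s.1, hmapsTo s.2⟩ = ⟨s.1, hsurj s.2⟩ := Subtype.ext (hright s.1 s.2)
      rw [← h2, Homeomorph.symm_apply_apply]
    have hres : (Set.Icc (0:ℝ) (thetaA G a)).restrict y
        = fun s : (Set.Icc (0:ℝ) (thetaA G a)) =>
            ((h.symm ⟨s.1, hsurj s.2⟩ : (Set.Icc (0:ℝ) a)) : ℝ) := by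
      funext s; exact (key s).symm
    change Continuous ((Set.Icc (0:ℝ) (thetaA G a)).restrict y)
    rw [hres]
    exact continuous_subtype_val.comp
      (h.symm.continuous.comp (Continuous.subtype_mk continuous_subtype_val _))
  -- derivative of y
  have hyderiv : ∀ s ∈ Set.Ioo 0 (thetaA G a),
      HasDerivAt y (-Real.sqrt (Ha G a (y s))) s := by
    intro s hs
    have hsT : s ∈ Set.Icc 0 (thetaA G a) := ⟨hs.1.le, hs.2.le⟩
    have htS : y s ∈ Set.Icc 0 a := hmapsTo hsT
    have ht0 : 0 < y s := hypos s ⟨hs.1.le, hs.2⟩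
    have hta : y s < a := by
      rcases eq_or_lt_of_le htS.2 with h | h
      · exfalso
        have h2 := hright s hsT
        rw [h, hgaa] at h2
        linarith [hs.1]
      · exact h
    have htIoo : y s ∈ Set.Ioo (0:ℝ) a := ⟨ht0, hta⟩
    have hfc : ContinuousAt f (y s) := hfcont.continuousAt (Ioo_mem_nhds ht0 hta)
    have hmeas : StronglyMeasurableAtFilter f (𝓝 (y s)) volume :=
      hfcont.stronglyMeasurableAtFilter isOpen_Ioo (y s) htIoo
    have hii : IntervalIntegrable f volume (y s) a :=
      (hIntIcc.mono_set (by rw [uIcc_of_le htS.2]; exact Icc_subset_Icc ht0.le le_rfl)).intervalIntegrable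
    have hgd : HasDerivAt (fun u => ∫ w in u..a, f w) (-(f (y s))) (y s) :=
      intervalIntegral.integral_hasDerivAt_left hii hmeas hfc
    have hgd2 : HasDerivAt (gfun G a) (-(f (y s))) (y s) := by
      apply hgd.congr_of_eventuallyEq
      filter_upwards [Iio_mem_nhds hta] with u hu
      exact hgeq u (le_of_lt hu)
    have hcy : ContinuousAt y s := hycont.continuousAt (Icc_mem_nhds hs.1 hs.2)
    have hfg : ∀ᶠ u in 𝓝 s, gfun G a (y u) = u := by
      filter_upwards [Icc_mem_nhds hs.1 hs.2] with u hu
      exact hright u hu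
    have hne : -(f (y s)) ≠ 0 := by
      have h2 := hfpos (y s) htIoo
      intro hcon
      rw [neg_eq_zero] at hcon
      linarith
    have h := HasDerivAt.of_local_left_inverse hcy hgd2 hne hfg
    have heq : (-(f (y s)))⁻¹ = -Real.sqrt (Ha G a (y s)) := by
      simp only [hf]
      rw [inv_neg, inv_inv]
    rwa [heq] at h
  exact ⟨hInt, hgcont, hganti, hgaa, rfl, y, hycont, hyanti, hmapsTo, hleft, hright,
    hy0, hyθ, hypos, hyderiv⟩
end

section
/- For every real p > 1, the improper integral identity 2·∫₀^∞ (4 + (p−1)·z²) / (2(p−1)·z⁴ + 4(3p−2)·z² + 16p) dz = (π/2)·(1 − (1/2)·√(2(p−1)/p)) holds. -/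
open Set Real MeasureTheory

lemma aux_integrable {b : ℝ} (hb : 0 < b) :
    IntegrableOn (fun x : ℝ => (b^2 + x^2)⁻¹) (Set.Ioi 0) := by
  have h : ∀ x : ℝ, (b^2 + x^2)⁻¹ = (b^2)⁻¹ * (1 + (b⁻¹ * x)^2)⁻¹ := by
    intro x
    field_simp
  simp only [h]
  apply Integrable.const_mul
  have := (integrableOn_Ioi_comp_mul_left_iff (fun x : ℝ => (1 + x^2)⁻¹) 0
    (inv_pos.mpr hb)).mpr
  have h2 : IntegrableOn (fun x : ℝ => (1 + (b⁻¹ * x)^2)⁻¹) (Ioi 0) := by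
    simpa using this (integrable_inv_one_add_sq.integrableOn)
  exact h2

lemma aux_integral {b : ℝ} (hb : 0 < b) :
    ∫ x in Set.Ioi (0:ℝ), (b^2 + x^2)⁻¹ = Real.pi / (2 * b) := by
  have h : ∀ x : ℝ, (b^2 + x^2)⁻¹ = (b^2)⁻¹ * (1 + (b⁻¹ * x)^2)⁻¹ := by
    intro x
    field_simp
  simp only [h]
  rw [MeasureTheory.integral_const_mul]
  rw [integral_comp_mul_left_Ioi (fun x : ℝ => (1 + x^2)⁻¹) 0 (inv_pos.mpr hb)]
  simp only [mul_zero, inv_inv, smul_eq_mul]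
  rw [integral_Ioi_inv_one_add_sq]
  rw [Real.arctan_zero]
  field_simp
  ring

theorem residue_integral_identity (p : ℝ) (hp : 1 < p) :
    2 * ∫ z in Set.Ioi (0:ℝ),
        (4 + (p - 1)*z^2) / (2*(p - 1)*z^4 + 4*(3*p - 2)*z^2 + 16*p)
      = (Real.pi/2) * (1 - (1/2) * Real.sqrt (2*(p - 1)/p)) := by
  have hp0 : (0:ℝ) < p := by linarith
  have hp1 : (0:ℝ) < p - 1 := by linarith
  set a : ℝ := Real.sqrt (2*p/(p-1)) with ha
  have ha2 : a^2 = 2*p/(p-1) := Real.sq_sqrt (by positivity)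
  have hapos : 0 < a := Real.sqrt_pos.mpr (by positivity)
  have key : ∀ z : ℝ, (4 + (p - 1)*z^2) / (2*(p - 1)*z^4 + 4*(3*p - 2)*z^2 + 16*p)
      = (2^2 + z^2)⁻¹ - (1/2) * (a^2 + z^2)⁻¹ := by
    intro z
    have hd1 : (2:ℝ)^2 + z^2 > 0 := by positivity
    have hd2 : a^2 + z^2 > 0 := by positivity
    have hd3 : 2*(p - 1)*z^4 + 4*(3*p - 2)*z^2 + 16*p > 0 := by nlinarith [sq_nonneg z, sq_nonneg (z^2), sq_nonneg (z^2-2)]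
    rw [ha2]
    have hpne : p - 1 ≠ 0 := ne_of_gt hp1
    rw [ha2] at hd2
    rw [div_eq_iff hd3.ne']
    field_simp
    ring
  simp only [key]
  rw [MeasureTheory.integral_sub (aux_integrable (by norm_num : (0:ℝ) < 2))
    ((aux_integrable hapos).const_mul _)]
  rw [MeasureTheory.integral_const_mul, aux_integral (by norm_num : (0:ℝ) < 2),
    aux_integral hapos]
  set s : ℝ := Real.sqrt (2*(p-1)/p) with hsdef
  have hs : a * s = 2 := by
    rw [ha, hsdef, ← Real.sqrt_mul (by positivity)]
    rw [show 2*p/(p-1) * (2*(p-1)/p) = 4 by field_simp; ring]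
    rw [show (4:ℝ) = 2^2 by norm_num, Real.sqrt_sq (by norm_num)]
  have hinv : (2*a)⁻¹ = s / 4 := by
    rw [eq_div_iff (by norm_num), inv_mul_eq_div, div_eq_iff (by positivity)]
    nlinarith [hs]
  rw [div_eq_mul_inv Real.pi (2*a), hinv]
  ring
end
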